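/- There exists a family of unranked trees (t_n) for n ≥ 2 such that t_n has n nodes, the minimal dag of t_n has exactly 2 nodes, and the number of distinct sibling sequences of t_n is exactly n. -/

import Mathlib

inductive UTree (σ : Type) : Type where
  | node : σ → List (UTree σ) → UTree σ

namespace UTree
variable {σ : Type}

noncomputable instance : DecidableEq (UTree σ) := Classical.decEq _

def children : UTree σ → List (UTree σ)
  | node _ cs => cs

def subs : UTree σ → List (UTree σ)
  | node a cs => node a cs :: (cs.attach.map (fun ⟨c, _⟩ => subs c)).flatten

def sibs : UTree σ → List (List (UTree σ))
  | node _ cs => cs.tails.filter (fun l => !l.isEmpty)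
      ++ (cs.attach.map (fun ⟨c, _⟩ => sibs c)).flatten

def sibseqs (t : UTree σ) : List (List (UTree σ)) := [t] :: sibs t

def edges : UTree σ → ℕ
  | node _ cs => cs.length + (cs.attach.map (fun ⟨c, _⟩ => edges c)).sum

def rootDeg : UTree σ → ℕ
  | node _ cs => cs.length

def nodes : UTree σ → ℕ
  | node _ cs => 1 + (cs.attach.map (fun ⟨c, _⟩ => nodes c)).sum

end UTree

/-- There is a family of trees `t n` (for `n ≥ 2`) with `n` nodes, whose minimal dag has
exactly 2 nodes (2 distinct subtrees) while the fcns-encoded binary dag has `n` nodes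
(`n` distinct sibling sequences). -/
lemma tails_filter_replicate (k : ℕ) {α : Type} (a : α) :
    (List.replicate k a).tails.filter (fun l => !l.isEmpty)
    = (List.range k).map (fun j => List.replicate (k - j) a) := by
  induction k with
  | zero => simp
  | succ k ih =>
    rw [List.replicate_succ, List.tails_cons, List.range_succ_eq_map]
    simp only [List.filter_cons, List.map_cons, List.map_map]
    simp [ih, ← List.replicate_succ]

theorem exists_family_dag_two_nodes_bdag_n_nodes :
    ∃ t : ℕ → UTree ℕ, ∀ n : ℕ, 2 ≤ n →
      UTree.nodes (t n) = n ∧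
      (UTree.subs (t n)).toFinset.card = 2 ∧
      (UTree.sibseqs (t n)).toFinset.card = n := by
  classical
  refine ⟨fun n => .node 0 (List.replicate (n-1) (.node 1 [])), fun n hn => ?_⟩
  obtain ⟨k, rfl⟩ : ∃ k, n = k + 2 := ⟨n - 2, by omega⟩
  set a : UTree ℕ := .node 1 [] with ha
  have hrep : k + 2 - 1 = k + 1 := by omega
  have hna : UTree.nodes a = 1 := by simp [UTree.nodes, ha]
  have hta : (UTree.node 0 (List.replicate (k+1) a)) ≠ a := by simp [ha]
  refine ⟨?_, ?_, ?_⟩ <;> beta_reduce <;> rw [hrep]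
  · simp [UTree.nodes, List.attach_map_val, List.map_replicate, hna,
      List.sum_replicate, Function.comp]
    omega
  ·
    have hsa : UTree.subs a = [a] := by simp [UTree.subs, ha]
    have : UTree.subs (.node 0 (List.replicate (k+1) a))
        = .node 0 (List.replicate (k+1) a) :: List.replicate (k+1) a := by
      simp only [UTree.subs]
      congr 1
      rw [List.attach_map_val]
      simp [List.map_replicate, hsa, List.flatten_replicate_singleton]
    rw [this]
    rw [List.toFinset_cons]
    have : (List.replicate (k+1) a).toFinset = {a} :=
      List.toFinset_replicate_of_ne_zero (by omega)
    rw [this, Finset.card_insert_of_notMem (by simp [hta]), Finset.card_singleton]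
  ·
    have hsba : UTree.sibs a = [] := by simp [UTree.sibs, ha]
    have hsib : UTree.sibs (.node 0 (List.replicate (k+1) a))
        = (List.range (k+1)).map (fun j => List.replicate (k+1 - j) a) := by
      simp only [UTree.sibs]
      rw [tails_filter_replicate]
      rw [List.attach_map_val]
      simp [List.map_replicate, hsba]
    rw [UTree.sibseqs, hsib, List.toFinset_cons]
    rw [Finset.card_insert_of_notMem]
    · have hnd : ((List.range (k+1)).map (fun j => List.replicate (k+1-j) a)).Nodup := by
        refine (List.nodup_range).map_on ?_
        intro i hi j hj hij
        have := congrArg List.length hij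
        simp only [List.length_replicate] at this
        simp only [List.mem_range] at hi hj
        omega
      rw [List.toFinset_card_of_nodup hnd]
      simp
    · simp only [List.mem_toFinset, List.mem_map, List.mem_range, not_exists]
      rintro j ⟨hj, hrepl⟩
      have hmem : a ∈ List.replicate (k+1-j) a := by
        rw [List.mem_replicate]; exact ⟨by omega, rfl⟩
      rw [hrepl] at hmem
      simp at hmem
      exact hta hmem.symm
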